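/- (Anarchy Lemma) Let δ be a dissimilarity map on {1,…,m} satisfying the Kalmanson conditions with respect to the identity circular ordering, and let Q_δ(i,j) = (m−2)·δ(i,j) − Σ_{t≠i} δ(i,t) − Σ_{t≠j} δ(j,t). Then for every index i with i + 3 ≤ m, Q_δ(i, i+3) − Q_δ(i+1, i+2) ≥ 0. -/
import Mathlib


/-- A dissimilarity map on `{1,…,m}` (modeled as `Fin m`): symmetric,
nonnegative, and zero on the diagonal. -/
def IsDissimilarity {m : ℕ} (δ : Fin m → Fin m → ℝ) : Prop :=
  (∀ i j, δ i j = δ j i) ∧ (∀ i j, 0 ≤ δ i j) ∧ (∀ i, δ i i = 0)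

/-- The Kalmanson conditions with respect to the identity circular ordering. -/
def Kalmanson {m : ℕ} (δ : Fin m → Fin m → ℝ) : Prop :=
  ∀ i j k l : Fin m, i < j → j < k → k < l →
    δ i j + δ k l ≤ δ i k + δ j l ∧ δ i l + δ j k ≤ δ i k + δ j l

/-- The neighbor-joining selection criterion
`Q_δ(i,j) = (m−2)·δ(i,j) − Σ_{t≠i} δ(i,t) − Σ_{t≠j} δ(j,t)`. -/
noncomputable def Qcrit {m : ℕ} (δ : Fin m → Fin m → ℝ) (i j : Fin m) : ℝ :=
  ((m : ℝ) - 2) * δ i j - ∑ t ∈ Finset.univ.erase i, δ i t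
    - ∑ t ∈ Finset.univ.erase j, δ j t

/-- Anarchy Lemma: if `δ` is a Kalmanson dissimilarity map on
`{1,…,m}`, then for every index `i` with `i + 3 ≤ m` one has
`Q_δ(i,i+3) − Q_δ(i+1,i+2) ≥ 0`. -/
theorem Q_anarchy {m : ℕ} (δ : Fin m → Fin m → ℝ)
    (hdis : IsDissimilarity δ) (hK : Kalmanson δ)
    (i k l j : Fin m) (hk : (k : ℕ) = (i : ℕ) + 1) (hl : (l : ℕ) = (i : ℕ) + 2)
    (hj : (j : ℕ) = (i : ℕ) + 3) :
    Qcrit δ i j - Qcrit δ k l ≥ 0 := by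
  obtain ⟨sym, nonneg, diag⟩ := hdis
  have hm : (i : ℕ) + 3 < m := hj ▸ j.isLt
  have hik : i < k := by rw [Fin.lt_def]; omega
  have hkl : k < l := by rw [Fin.lt_def]; omega
  have hlj : l < j := by rw [Fin.lt_def]; omega
  have hil : i < l := lt_trans hik hkl
  have hij : i < j := lt_trans hil hlj
  have hkj : k < j := lt_trans hkl hlj
  set g : Fin m → ℝ := fun t => δ k t + δ l t - δ i t - δ j t with hg
  -- bound on points outside {i,k,l,j}
  have hout : ∀ t : Fin m, t ≠ i → t ≠ k → t ≠ l → t ≠ j →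
      δ k l - δ i j ≤ g t := by
    intro t hti htk htl htj
    have hti' : (t : ℕ) ≠ (i : ℕ) := fun h => hti (Fin.ext h)
    have htk' : (t : ℕ) ≠ (k : ℕ) := fun h => htk (Fin.ext h)
    have htl' : (t : ℕ) ≠ (l : ℕ) := fun h => htl (Fin.ext h)
    have htj' : (t : ℕ) ≠ (j : ℕ) := fun h => htj (Fin.ext h)
    rcases lt_or_gt_of_ne hti' with ht | ht
    · -- t < i
      have hti2 : t < i := by rw [Fin.lt_def]; omega
      have h1 := (hK t i k l hti2 hik hkl).1
      have h2 := (hK t i l j hti2 hil hlj).2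
      simp only [hg]
      linarith [sym k t, sym l t, sym i t, sym j t]
    · -- j < t
      have hjt : j < t := by rw [Fin.lt_def]; omega
      have h1 := (hK i k l t hik hkl (lt_trans hlj hjt)).2
      have h2 := (hK i l j t hil hlj hjt).1
      simp only [hg]
      linarith
  -- set of outside points
  set S := (((Finset.univ.erase i).erase k).erase l).erase j with hS
  have hki : k ≠ i := Fin.ne_of_gt hik
  have hli : l ≠ i := Fin.ne_of_gt hil
  have hlk : l ≠ k := Fin.ne_of_gt hkl
  have hji : j ≠ i := Fin.ne_of_gt hij
  have hjk : j ≠ k := Fin.ne_of_gt hkj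
  have hjl : j ≠ l := Fin.ne_of_gt hlj
  have hkm : k ∈ Finset.univ.erase i := Finset.mem_erase.mpr ⟨hki, Finset.mem_univ k⟩
  have hlm : l ∈ (Finset.univ.erase i).erase k :=
    Finset.mem_erase.mpr ⟨hlk, Finset.mem_erase.mpr ⟨hli, Finset.mem_univ l⟩⟩
  have hjm : j ∈ ((Finset.univ.erase i).erase k).erase l :=
    Finset.mem_erase.mpr ⟨hjl, Finset.mem_erase.mpr ⟨hjk,
      Finset.mem_erase.mpr ⟨hji, Finset.mem_univ j⟩⟩⟩
  have e1 : ∑ t ∈ Finset.univ.erase i, g t + g i = ∑ t, g t :=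
    Finset.sum_erase_add _ _ (Finset.mem_univ i)
  have e2 : ∑ t ∈ (Finset.univ.erase i).erase k, g t + g k
      = ∑ t ∈ Finset.univ.erase i, g t := Finset.sum_erase_add _ _ hkm
  have e3 : ∑ t ∈ ((Finset.univ.erase i).erase k).erase l, g t + g l
      = ∑ t ∈ (Finset.univ.erase i).erase k, g t := Finset.sum_erase_add _ _ hlm
  have e4 : ∑ t ∈ S, g t + g j
      = ∑ t ∈ ((Finset.univ.erase i).erase k).erase l, g t :=
    Finset.sum_erase_add _ _ hjm
  -- cardinality of S
  have hcard : S.card = m - 4 := by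
    rw [hS, Finset.card_erase_of_mem hjm, Finset.card_erase_of_mem hlm,
      Finset.card_erase_of_mem hkm,
      Finset.card_erase_of_mem (Finset.mem_univ i), Finset.card_univ,
      Fintype.card_fin]
    omega
  have hcardR : (S.card : ℝ) = (m : ℝ) - 4 := by
    rw [hcard]
    have : (4 : ℕ) ≤ m := by omega
    push_cast [Nat.cast_sub this]
    ring
  -- lower bound on sum over S
  have hSsum : ((m : ℝ) - 4) * (δ k l - δ i j) ≤ ∑ t ∈ S, g t := by
    have := Finset.card_nsmul_le_sum S g (δ k l - δ i j) (by
      intro t ht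
      simp only [hS, Finset.mem_erase] at ht
      exact hout t ht.2.2.2.1 ht.2.2.1 ht.2.1 ht.1)
    rwa [nsmul_eq_mul, hcardR] at this
  -- values of g at i,k,l,j
  have hgi : g i = δ k i + δ l i - δ j i := by simp [hg, diag]
  have hgk : g k = δ l k - δ i k - δ j k := by simp [hg, diag]
  have hgl : g l = δ k l - δ i l - δ j l := by simp [hg, diag]
  have hgj : g j = δ k j + δ l j - δ i j := by simp [hg, diag]
  -- rewrite Qcrit using full sums
  have erI : ∑ t ∈ Finset.univ.erase i, δ i t = ∑ t, δ i t :=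
    Finset.sum_erase _ (diag i)
  have erK : ∑ t ∈ Finset.univ.erase k, δ k t = ∑ t, δ k t :=
    Finset.sum_erase _ (diag k)
  have erL : ∑ t ∈ Finset.univ.erase l, δ l t = ∑ t, δ l t :=
    Finset.sum_erase _ (diag l)
  have erJ : ∑ t ∈ Finset.univ.erase j, δ j t = ∑ t, δ j t :=
    Finset.sum_erase _ (diag j)
  have hsplit : ∑ t, g t = (∑ t, δ k t) + (∑ t, δ l t)
      - (∑ t, δ i t) - (∑ t, δ j t) := by
    simp [hg, Finset.sum_sub_distrib, Finset.sum_add_distrib]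
  have key : ((m : ℝ) - 2) * (δ i j) - ((m : ℝ) - 2) * (δ k l)
      + ((m : ℝ) - 4) * (δ k l - δ i j) = 2 * δ i j - 2 * δ k l := by ring
  simp only [Qcrit, erI, erJ, erK, erL]
  linarith [sym k i, sym l i, sym j i, sym l k, sym j k, sym j l,
    sym k j, sym l j, sym i k, sym i l]
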